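/- arXiv:1801.09139 — 2 statements merged into one kernel-verified Lean document; each statement's English description precedes it below -/
import Mathlib

section
/- A monomial and its projective reduction take the same values on F_q-rational projective points: for every monomial μ in x_0,...,x_m and every (a_0,...,a_m) ∈ F_q^{m+1}, μ(a_0,...,a_m) = μ̄(a_0,...,a_m). -/
open MvPolynomial Finset

/-- Reduce an exponent modulo `q-1`: unchanged if `≤ q-1`, otherwise the
representative in `{1,...,q-1}` congruent to it modulo `q-1`. -/
def redExp (q a : ℕ) : ℕ := if a ≤ q - 1 then a else (a - 1) % (q - 1) + 1

/-- Projective reduction of a monomial (given by its exponent vector): all exponents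
below the top variable of the support are reduced modulo `q-1`, and the difference is
transferred to the exponent of the top variable. -/
noncomputable def projRed (q : ℕ) {m : ℕ} (μ : Fin (m + 1) →₀ ℕ) : Fin (m + 1) →₀ ℕ :=
  if h : μ.support.Nonempty then
    letI ℓ := μ.support.max' h
    Finsupp.equivFunOnFinite.symm fun i =>
      if i < ℓ then redExp q (μ i)
      else if i = ℓ then μ ℓ + ∑ j ∈ Finset.univ.filter (· < ℓ), (μ j - redExp q (μ j))
      else 0
  else 0

/-- Projective reduction of a polynomial: the linear extension of projective
reduction of monomials. -/
noncomputable def polyRed (q : ℕ) {m : ℕ} {k : Type} [CommRing k]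
    (f : MvPolynomial (Fin (m + 1)) k) : MvPolynomial (Fin (m + 1)) k :=
  f.support.sum fun μ => monomial (projRed q μ) (coeff μ f)

/-- The ideal generated by the Fermat polynomials `X i ^ q * X j - X i * X j ^ q`. -/
noncomputable def fermatIdeal (q m : ℕ) (k : Type) [CommRing k] : Ideal (MvPolynomial (Fin (m + 1)) k) :=
  Ideal.span {f | ∃ i j : Fin (m + 1), i < j ∧ f = X i ^ q * X j - X i * X j ^ q}

/-- The leading exponent (exponent vector of the leading monomial) of a multivariate
polynomial with respect to a monomial order. -/
noncomputable def lmExp {σ : Type} (mo : MonomialOrder σ) {R : Type} [CommSemiring R]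
    (f : MvPolynomial σ R) : σ →₀ ℕ :=
  mo.toSyn.symm (f.support.sup fun μ => mo.toSyn μ)

lemma redExp_le (q n : ℕ) : redExp q n ≤ n := by
  unfold redExp
  split
  · exact le_rfl
  · rename_i h
    have hn : 1 ≤ n := by omega
    have := Nat.mod_le (n - 1) (q - 1)
    omega

lemma redExp_eq_zero_iff (q n : ℕ) : redExp q n = 0 ↔ n = 0 := by
  unfold redExp
  split <;> omega

lemma dvd_sub_redExp (q n : ℕ) (_hq2 : 2 ≤ q) : (q - 1) ∣ n - redExp q n := by
  unfold redExp
  split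
  · simp
  · rename_i h
    have hmod := Nat.div_add_mod (n - 1) (q - 1)
    refine ⟨(n - 1) / (q - 1), ?_⟩
    have := Nat.mod_le (n - 1) (q - 1)
    omega

lemma pow_redExp {K : Type} [Field K] [Fintype K] {q : ℕ} (hq : Fintype.card K = q)
    (x : K) (n : ℕ) : x ^ n = x ^ redExp q n := by
  have hq2 : 2 ≤ q := hq ▸ Fintype.one_lt_card
  rcases eq_or_ne x 0 with rfl | hx
  · rcases eq_or_ne n 0 with rfl | hn
    · have : redExp q 0 = 0 := (redExp_eq_zero_iff q 0).2 rfl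
      rw [this]
    · rw [zero_pow hn, zero_pow (by rw [Ne, redExp_eq_zero_iff]; exact hn)]
  · obtain ⟨t, ht⟩ := dvd_sub_redExp q n hq2
    have hle := redExp_le q n
    have hn : n = redExp q n + (q - 1) * t := by omega
    have hone : x ^ (q - 1) = 1 := by
      rw [← hq]; exact FiniteField.pow_card_sub_one_eq_one x hx
    conv_lhs => rw [hn]
    rw [pow_add, pow_mul, hone, one_pow, mul_one]

/-- A monomial and its projective reduction take the same values on points of `F_q^{m+1}`. -/
theorem projRed_eval_eq (q m : ℕ) (K : Type) [Field K] [Fintype K] (hq : Fintype.card K = q)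
    (μ : Fin (m + 1) →₀ ℕ) (a : Fin (m + 1) → K) :
    (∏ i, a i ^ μ i) = ∏ i, a i ^ (projRed q μ i) := by
  have hq2 : 2 ≤ q := hq ▸ Fintype.one_lt_card
  by_cases h : μ.support.Nonempty
  · set ℓ := μ.support.max' h with hℓ
    set D := ∑ j ∈ Finset.univ.filter (· < ℓ), (μ j - redExp q (μ j)) with hD
    have hν : ∀ i, projRed q μ i =
        if i < ℓ then redExp q (μ i) else if i = ℓ then μ ℓ + D else 0 := by
      intro i
      simp only [projRed, dif_pos h]
      rfl
    have hμℓ : μ ℓ ≠ 0 := Finsupp.mem_support_iff.mp (μ.support.max'_mem h)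
    have hgt : ∀ i, ℓ < i → μ i = 0 := by
      intro i hi
      by_contra hc
      exact absurd (μ.support.le_max' i (Finsupp.mem_support_iff.mpr hc)) (not_le.mpr hi)
    have hrest : ∏ i ∈ Finset.univ.erase ℓ, a i ^ μ i
        = ∏ i ∈ Finset.univ.erase ℓ, a i ^ projRed q μ i := by
      refine Finset.prod_congr rfl fun i hi => ?_
      have hne : i ≠ ℓ := Finset.ne_of_mem_erase hi
      rw [hν i]
      rcases lt_or_gt_of_ne hne with hlt | hgt'
      · rw [if_pos hlt]
        exact pow_redExp hq (a i) (μ i)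
      · rw [if_neg (not_lt.mpr hgt'.le), if_neg hne, hgt i hgt']
    rw [← Finset.mul_prod_erase _ _ (Finset.mem_univ ℓ),
        ← Finset.mul_prod_erase _ (fun i => a i ^ projRed q μ i) (Finset.mem_univ ℓ),
        ← hrest]
    congr 1
    rw [hν ℓ, if_neg (lt_irrefl ℓ), if_pos rfl]
    rcases eq_or_ne (a ℓ) 0 with h0 | h0
    · rw [h0, zero_pow hμℓ, zero_pow (by omega)]
    · have hdvd : (q - 1) ∣ D := Finset.dvd_sum fun j _ => dvd_sub_redExp q (μ j) hq2
      obtain ⟨t, ht⟩ := hdvd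
      have hone : a ℓ ^ (q - 1) = 1 := by
        rw [← hq]; exact FiniteField.pow_card_sub_one_eq_one _ h0
      rw [pow_add, ht, pow_mul, hone, one_pow, mul_one]
  · rw [Finset.not_nonempty_iff_eq_empty, Finsupp.support_eq_empty] at h
    subst h
    simp [projRed]
end

section
/- The difference between any monomial μ and its projective reduction μ̄ lies in the ideal generated by the Fermat polynomials: μ - μ̄ ∈ Γ_q(k) = ⟨x_i^q x_j - x_i x_j^q : 0 ≤ i < j ≤ m⟩ in k[x_0,...,x_m], for any field k containing F_q. -/
open MvPolynomial Finset

lemma redExp_sub (q a : ℕ) (hq : 2 ≤ q) (ha : q ≤ a) :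
    redExp q (a - (q - 1)) = redExp q a := by
  unfold redExp
  rw [if_neg (by omega : ¬ a ≤ q - 1)]
  by_cases h2 : a - (q-1) ≤ q - 1
  · rw [if_pos h2]
    rw [show a - 1 = (a - (q-1) - 1) + (q - 1) by omega, Nat.add_mod_right,
      Nat.mod_eq_of_lt (by omega)]
    omega
  · rw [if_neg h2, show a - 1 = (a - (q-1) - 1) + (q - 1) by omega, Nat.add_mod_right]

lemma redExp_le_s11 (q a : ℕ) (hq : 2 ≤ q) (ha : q ≤ a) :
    redExp q a + (q - 1) ≤ a := by
  unfold redExp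
  rw [if_neg (by omega)]
  have h3 : (a-1) % (q-1) = (a - 1 - (q-1)) % (q-1) := by
    conv_lhs => rw [show a - 1 = (a - 1 - (q-1)) + (q-1) by omega, Nat.add_mod_right]
  have := Nat.mod_le (a - 1 - (q-1)) (q-1)
  omega

lemma redExp_id (q a : ℕ) (ha : a ≤ q - 1) : redExp q a = a := if_pos ha

lemma projRed_apply (q : ℕ) {m : ℕ} (μ : Fin (m + 1) →₀ ℕ) (h : μ.support.Nonempty)
    (x : Fin (m + 1)) :
    projRed q μ x = if x < μ.support.max' h then redExp q (μ x)
      else if x = μ.support.max' h then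
        μ (μ.support.max' h) + ∑ j ∈ Finset.univ.filter (· < μ.support.max' h),
          (μ j - redExp q (μ j))
      else 0 := by
  rw [projRed, dif_pos h]; rfl

lemma step_mem (q m : ℕ) (k : Type) [CommRing k] (i j : Fin (m + 1)) (hij : i < j)
    (ν : Fin (m + 1) →₀ ℕ) :
    monomial (ν + Finsupp.single i q + Finsupp.single j 1) (1 : k)
      - monomial (ν + Finsupp.single i 1 + Finsupp.single j q) (1 : k)
      ∈ fermatIdeal q m k := by
  have key : monomial (ν + Finsupp.single i q + Finsupp.single j 1) (1 : k)
      - monomial (ν + Finsupp.single i 1 + Finsupp.single j q) (1 : k)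
      = monomial ν 1 * (X i ^ q * X j - X i * X j ^ q) := by
    rw [mul_sub]
    congr 1 <;>
    · rw [X_pow_eq_monomial, X, monomial_mul, monomial_mul, one_mul, one_mul, add_assoc]
  rw [key]
  exact Ideal.mul_mem_left _ _ (Ideal.subset_span ⟨i, j, hij, rfl⟩)

lemma aux (q m : ℕ) (hq : 2 ≤ q) (k : Type) [CommRing k] :
    ∀ (N : ℕ) (μ : Fin (m + 1) →₀ ℕ) (h : μ.support.Nonempty),
      (∑ j ∈ Finset.univ.filter (· < μ.support.max' h), μ j) ≤ N →
      monomial μ (1 : k) - monomial (projRed q μ) (1 : k) ∈ fermatIdeal q m k := by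
  intro N
  induction N with
  | zero =>
    intro μ h hN
    set ℓ := μ.support.max' h with hℓ
    have hall : ∀ x, x < ℓ → μ x = 0 := by
      intro x hx
      have hx' : x ∈ Finset.univ.filter (· < ℓ) := by simp [hx]
      have := Finset.sum_le_sum_of_subset (f := μ) (Finset.singleton_subset_iff.mpr hx')
      simp only [Finset.sum_singleton] at this
      omega
    have : projRed q μ = μ := by
      ext x
      rw [projRed_apply q μ h x, ← hℓ]
      rcases lt_trichotomy x ℓ with hx | hx | hx
      · rw [if_pos hx, hall x hx, redExp_id q 0 (by omega)]
      · rw [if_neg (by omega), if_pos hx, hx]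
        have : ∀ j ∈ Finset.univ.filter (· < ℓ), μ j - redExp q (μ j) = 0 := by
          intro j hj
          simp only [Finset.mem_filter] at hj
          rw [hall j hj.2, redExp_id q 0 (by omega)]
        rw [Finset.sum_congr rfl this, Finset.sum_const_zero, add_zero]
      · rw [if_neg (by omega), if_neg (by omega)]
        by_contra hc
        have : x ∈ μ.support := Finsupp.mem_support_iff.mpr (Ne.symm hc)
        exact absurd (Finset.le_max' _ x this) (by omega)
    rw [this, sub_self]
    exact Ideal.zero_mem _
  | succ N ih =>
    intro μ h hN
    set ℓ := μ.support.max' h with hℓ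
    by_cases hex : ∃ i, i < ℓ ∧ q ≤ μ i
    · obtain ⟨i, hiℓ, hiq⟩ := hex
      have hμℓ : 1 ≤ μ ℓ := by
        have : ℓ ∈ μ.support := Finset.max'_mem _ h
        have := Finsupp.mem_support_iff.mp this
        omega
      have hiℓ' : i ≠ ℓ := ne_of_lt hiℓ
      set ν : Fin (m + 1) →₀ ℕ := Finsupp.equivFunOnFinite.symm
        (fun x => if x = i then μ i - q else if x = ℓ then μ ℓ - 1 else μ x) with hν
      have hνapp : ∀ x, ν x = if x = i then μ i - q else if x = ℓ then μ ℓ - 1 else μ x :=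
        fun x => rfl
      set μ' := ν + Finsupp.single i 1 + Finsupp.single ℓ q with hμ'
      have hμ'app : ∀ x, μ' x = if x = i then μ i - (q - 1)
          else if x = ℓ then μ ℓ + (q - 1) else μ x := by
        intro x
        simp only [hμ', Finsupp.add_apply, hνapp, Finsupp.single_apply]
        split_ifs <;> subst_vars <;> simp_all <;> omega
      have hμeq : μ = ν + Finsupp.single i q + Finsupp.single ℓ 1 := by
        ext x
        simp only [Finsupp.add_apply, hνapp, Finsupp.single_apply]
        split_ifs <;> subst_vars <;> simp_all <;> omega
      have step1 : monomial μ (1 : k) - monomial μ' 1 ∈ fermatIdeal q m k := by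
        rw [hμeq]; exact step_mem q m k i ℓ hiℓ ν
      have hsupp : μ'.support = μ.support := by
        ext x
        simp only [Finsupp.mem_support_iff, hμ'app x]
        split_ifs <;> subst_vars <;> omega
      have h' : μ'.support.Nonempty := by rw [hsupp]; exact h
      have hmax : μ'.support.max' h' = ℓ := by
        have h1 : ℓ ∈ μ'.support := by rw [hsupp]; exact Finset.max'_mem _ h
        apply le_antisymm
        · apply Finset.max'_le
          intro y hy
          rw [hsupp] at hy
          exact Finset.le_max' _ y hy
        · exact Finset.le_max' _ ℓ h1
      have hS : i ∈ Finset.univ.filter (· < ℓ) := by simp [hiℓ]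
      have herase : ∀ (f g : Fin (m+1) → ℕ), (∀ j ∈ (Finset.univ.filter (· < ℓ)).erase i, f j = g j) →
          ∑ j ∈ (Finset.univ.filter (· < ℓ)).erase i, f j
            = ∑ j ∈ (Finset.univ.filter (· < ℓ)).erase i, g j :=
        fun f g hh => Finset.sum_congr rfl hh
      have hμ'eq : ∀ j, j ≠ i → j ≠ ℓ → μ' j = μ j := by
        intro j h1 h2; rw [hμ'app, if_neg h1, if_neg h2]
      have hredle := redExp_le_s11 q (μ i) hq hiq
      have hred := redExp_sub q (μ i) hq hiq
      have hproj : projRed q μ' = projRed q μ := by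
        ext x
        rw [projRed_apply q μ' h' x, projRed_apply q μ h x, hmax, ← hℓ]
        rcases lt_trichotomy x ℓ with hx | hx | hx
        · rw [if_pos hx, if_pos hx]
          by_cases h1 : x = i
          · subst h1
            rw [hμ'app, if_pos rfl, hred]
          · rw [hμ'eq x h1 (ne_of_lt hx)]
        · subst hx
          rw [if_neg (lt_irrefl _), if_neg (lt_irrefl _), if_pos rfl, if_pos rfl]
          rw [← Finset.sum_erase_add _ _ hS, ← Finset.sum_erase_add _ (fun j => μ j - redExp q (μ j)) hS]
          rw [herase (fun j => μ' j - redExp q (μ' j)) (fun j => μ j - redExp q (μ j))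
            (fun j hj => by
              have hji : j ≠ i := (Finset.mem_erase.mp hj).1
              have hjℓ : j ≠ ℓ := ne_of_lt (Finset.mem_filter.mp (Finset.mem_erase.mp hj).2).2
              show μ' j - redExp q (μ' j) = μ j - redExp q (μ j)
              rw [hμ'eq j hji hjℓ])]
          rw [hμ'app ℓ, if_neg (Ne.symm hiℓ'), if_pos rfl, hμ'app i, if_pos rfl, hred]
          omega
        · rw [if_neg (by omega), if_neg (by omega), if_neg (by omega), if_neg (by omega)]
      have hsum : ∑ j ∈ Finset.univ.filter (· < μ'.support.max' h'), μ' j ≤ N := by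
        rw [hmax]
        rw [← Finset.sum_erase_add _ _ hS] at hN ⊢
        rw [herase μ' μ (fun j hj => by
          have hji : j ≠ i := (Finset.mem_erase.mp hj).1
          have hjℓ : j ≠ ℓ := ne_of_lt (Finset.mem_filter.mp (Finset.mem_erase.mp hj).2).2
          show μ' j = μ j
          rw [hμ'eq j hji hjℓ])]
        rw [hμ'app i, if_pos rfl]
        omega
      have step2 := ih μ' h' hsum
      rw [hproj] at step2
      have := Ideal.add_mem _ step1 step2
      rwa [sub_add_sub_cancel] at this
    · -- no exponent below ℓ exceeds q-1: projRed q μ = μ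
      push_neg at hex
      have : projRed q μ = μ := by
        ext x
        rw [projRed_apply q μ h x, ← hℓ]
        rcases lt_trichotomy x ℓ with hx | hx | hx
        · rw [if_pos hx, redExp_id q (μ x) (by have := hex x hx; omega)]
        · rw [if_neg (by omega), if_pos hx, hx]
          have : ∀ j ∈ Finset.univ.filter (· < ℓ), μ j - redExp q (μ j) = 0 := by
            intro j hj
            simp only [Finset.mem_filter] at hj
            rw [redExp_id q (μ j) (by have := hex j hj.2; omega)]
            omega
          rw [Finset.sum_congr rfl this, Finset.sum_const_zero, add_zero]
        · rw [if_neg (by omega), if_neg (by omega)]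
          by_contra hc
          have : x ∈ μ.support := Finsupp.mem_support_iff.mpr (Ne.symm hc)
          exact absurd (Finset.le_max' _ x this) (by omega)
      rw [this, sub_self]
      exact Ideal.zero_mem _


/-- The difference between a monomial and its projective reduction lies in the ideal
generated by the Fermat polynomials, over any field `k` containing `F_q`. -/
theorem monomial_sub_projRed_mem_fermatIdeal (q m : ℕ)
    (Fq : Type) [Field Fq] [Fintype Fq] (hq : Fintype.card Fq = q)
    (k : Type) [Field k] [Algebra Fq k] (μ : Fin (m + 1) →₀ ℕ) :
    monomial μ (1 : k) - monomial (projRed q μ) (1 : k) ∈ fermatIdeal q m k := by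
  have hq2 : 2 ≤ q := hq ▸ Fintype.one_lt_card
  by_cases h : μ.support.Nonempty
  · exact aux q m hq2 k _ μ h le_rfl
  · rw [not_nonempty_iff_eq_empty] at h
    have hμ0 : μ = 0 := Finsupp.support_eq_empty.mp h
    rw [projRed, dif_neg (by rw [h]; exact Finset.not_nonempty_empty), hμ0, sub_self]
    exact Ideal.zero_mem _
end
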